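/- Consider two paths P^1 (nodes v_1^1,…,v_{m1}^1) and P^2 (nodes v_1^2,…,v_{m2}^2), where node v fails iff all its supply nodes fail, supply nodes failing independently with probability p. Let d+1 = min over pairs (i,j) of |S_i^1 ∪ S_j^2|, let m̄ be the number of pairs (i,j) attaining |S_i^1 ∪ S_j^2| = d+1 with pairwise-distinct unions, and assume all other pairwise unions among distinct minimal pairs have size ≥ d+2, and unions involving a non-minimal pair have size ≥ d+3. If 0 < p ≤ ε/(m1·m2) with ε ∈ (0,1), then (1-ε)·m̄·p^{d+1} ≤ P(both paths fail) ≤ (1+ε)·m̄·p^{d+1}. -/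

import Mathlib

open scoped Classical

/-- Probability of an event on failure configurations, when each element of `U`
fails independently with probability `p`. -/
noncomputable def failPr {U : Type*} [Fintype U] (p : ℝ) (E : Finset U → Prop) : ℝ :=
  ∑ W : Finset U, if E W then p ^ W.card * (1 - p) ^ (Fintype.card U - W.card) else 0

lemma sum_ite_filter {α β : Type*} [AddCommMonoid β] (s : Finset α) (P : α → Prop) (f : α → β) :
    (∑ a ∈ s, if P a then f a else 0) = ∑ a ∈ s.filter P, f a := by
  rw [Finset.sum_filter]

lemma sum_powerset_binom {U : Type*} [DecidableEq U] (p : ℝ) (s : Finset U) :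
    ∑ V ∈ s.powerset, p ^ V.card * (1 - p) ^ (s.card - V.card) = 1 := by
  have h := Finset.prod_add (fun _ : U => p) (fun _ : U => 1 - p) s
  simp only [add_sub_cancel, Finset.prod_const, one_pow] at h
  rw [Finset.sum_congr rfl (fun t ht => ?_), ← h]
  rw [Finset.card_sdiff_of_subset (Finset.mem_powerset.mp ht)]

lemma failPr_subset {U : Type*} [Fintype U] [DecidableEq U] (p : ℝ) (T : Finset U) :
    failPr p (fun W => T ⊆ W) = p ^ T.card := by
  unfold failPr
  rw [sum_ite_filter Finset.univ (fun W : Finset U => T ⊆ W)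
      (fun W : Finset U => p ^ W.card * (1 - p) ^ (Fintype.card U - W.card))]
  have hTc : Tᶜ.card = Fintype.card U - T.card := by simp [Finset.card_compl]
  have key : _ = ∑ V ∈ Tᶜ.powerset, p ^ T.card * (p ^ V.card * (1 - p) ^ (Tᶜ.card - V.card)) :=
    Finset.sum_nbij' (s := @Finset.filter (Finset U) (fun W : Finset U => T ⊆ W) (fun a => Classical.propDecidable _) Finset.univ)
      (f := fun W : Finset U => p ^ W.card * (1 - p) ^ (Fintype.card U - W.card))
      (fun W => W \ T) (fun V => V ∪ T) ?_ ?_ ?_ ?_ ?_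
  · exact key.trans (by rw [← Finset.mul_sum, sum_powerset_binom, mul_one])
  · intro W hW
    simp only [Finset.mem_filter] at hW
    rw [Finset.mem_powerset]
    intro x hx
    simp only [Finset.mem_sdiff] at hx
    simp [hx.2]
  · intro V _
    simp [Finset.mem_filter]
  · intro W hW
    simp only [Finset.mem_filter] at hW
    exact Finset.sdiff_union_of_subset hW.2
  · intro V hV
    rw [Finset.mem_powerset] at hV
    have hd : Disjoint V T := by
      rw [Finset.disjoint_right]
      intro x hxT hxV
      exact (Finset.mem_compl.mp (hV hxV)) hxT
    rw [Finset.union_sdiff_right]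
    exact Finset.sdiff_eq_self_of_disjoint hd
  · intro W hW
    simp only [Finset.mem_filter] at hW
    have hc : W.card = (W \ T).card + T.card := by
      rw [Finset.card_sdiff_of_subset hW.2]
      have := Finset.card_le_card hW.2
      omega
    have hle : W.card ≤ Fintype.card U := Finset.card_le_univ W
    have hTle : T.card ≤ W.card := Finset.card_le_card hW.2
    have he : Fintype.card U - ((W \ T).card + T.card) = Tᶜ.card - (W \ T).card := by omega
    rw [hc, pow_add, he]
    ring

lemma failPr_congr {U : Type*} [Fintype U] (p : ℝ) {E F : Finset U → Prop}
    (h : ∀ W, E W ↔ F W) : failPr p E = failPr p F := by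
  unfold failPr
  exact Finset.sum_congr rfl fun W _ => if_congr (h W) rfl rfl

lemma failPr_mono {U : Type*} [Fintype U] {p : ℝ} (h0 : 0 ≤ p) (h1 : p ≤ 1)
    {E F : Finset U → Prop} (h : ∀ W, E W → F W) : failPr p E ≤ failPr p F := by
  unfold failPr
  refine Finset.sum_le_sum fun W _ => ?_
  have hμ : 0 ≤ p ^ W.card * (1 - p) ^ (Fintype.card U - W.card) :=
    mul_nonneg (pow_nonneg h0 _) (pow_nonneg (by linarith) _)
  by_cases hE : E W
  · rw [if_pos hE, if_pos (h W hE)]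
  · rw [if_neg hE]
    split_ifs
    exacts [hμ, le_rfl]

lemma failPr_union_le {U : Type*} [Fintype U] [DecidableEq U] {p : ℝ} (h0 : 0 ≤ p) (h1 : p ≤ 1)
    (𝒯 : Finset (Finset U)) :
    failPr p (fun W => ∃ T ∈ 𝒯, T ⊆ W) ≤ ∑ T ∈ 𝒯, p ^ T.card := by
  have step : failPr p (fun W => ∃ T ∈ 𝒯, T ⊆ W)
      ≤ ∑ T ∈ 𝒯, failPr p (fun W => T ⊆ W) := by
    unfold failPr
    rw [Finset.sum_comm]
    refine Finset.sum_le_sum fun W _ => ?_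
    have hμ : 0 ≤ p ^ W.card * (1 - p) ^ (Fintype.card U - W.card) :=
      mul_nonneg (pow_nonneg h0 _) (pow_nonneg (by linarith) _)
    by_cases hE : ∃ T ∈ 𝒯, T ⊆ W
    · obtain ⟨T0, hT0, hT0W⟩ := hE
      rw [if_pos ⟨T0, hT0, hT0W⟩]
      refine le_trans (le_of_eq ?_) (Finset.single_le_sum (fun T _ => ?_) hT0)
      · rw [if_pos hT0W]
      · split_ifs
        exacts [hμ, le_rfl]
    · rw [if_neg hE]
      exact Finset.sum_nonneg fun T _ => by split_ifs; exacts [hμ, le_rfl]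
  refine step.trans (le_of_eq (Finset.sum_congr rfl fun T _ => failPr_subset p T))

lemma indicator_bonferroni {α : Type*} [DecidableEq α] (s : Finset α) (P : α → Prop)
    (Q : α × α → Prop) (hQ : ∀ q, Q q ↔ P q.1 ∧ P q.2) (μ : ℝ) (hμ : 0 ≤ μ) :
    (∑ T ∈ s, if P T then μ else 0) - (∑ q ∈ s.offDiag, if Q q then μ else 0)
      ≤ @ite ℝ (∃ T ∈ s, P T) (Classical.propDecidable _) μ 0 := by
  have h1 : (∑ T ∈ s, if P T then μ else 0)
      = μ * ∑ T ∈ s, (if P T then (1:ℝ) else 0) := by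
    rw [Finset.mul_sum]
    exact Finset.sum_congr rfl fun T _ => by split_ifs <;> ring
  have h2 : (∑ q ∈ s.offDiag, if Q q then μ else 0)
      = μ * ∑ q ∈ s.offDiag,
          (if P q.1 then (1:ℝ) else 0) * (if P q.2 then (1:ℝ) else 0) := by
    rw [Finset.mul_sum]
    refine Finset.sum_congr rfl fun q _ => ?_
    by_cases hq1 : P q.1 <;> by_cases hq2 : P q.2 <;>
      simp [hQ, hq1, hq2]
  set a : ℝ := ∑ T ∈ s, (if P T then (1:ℝ) else 0) with ha
  have ha0 : 0 ≤ a := Finset.sum_nonneg fun T _ => by split_ifs <;> norm_num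
  have h3 : ∑ q ∈ s.offDiag,
      (if P q.1 then (1:ℝ) else 0) * (if P q.2 then (1:ℝ) else 0) = a * a - a := by
    have hprod : ∑ q ∈ s ×ˢ s,
        (if P q.1 then (1:ℝ) else 0) * (if P q.2 then (1:ℝ) else 0) = a * a := by
      rw [ha, Finset.sum_mul_sum]
      rw [Finset.sum_product]
    have hdiag : ∑ q ∈ s.diag,
        (if P q.1 then (1:ℝ) else 0) * (if P q.2 then (1:ℝ) else 0) = a := by
      rw [Finset.sum_diag]
      refine Finset.sum_congr rfl fun T _ => ?_
      split_ifs <;> ring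
    have hsplit := Finset.sum_union (f := fun q : α × α =>
        (if P q.1 then (1:ℝ) else 0) * (if P q.2 then (1:ℝ) else 0))
      (Finset.disjoint_diag_offDiag s)
    rw [Finset.diag_union_offDiag, hprod, hdiag] at hsplit
    linarith
  rw [h1, h2, h3]
  by_cases hE : ∃ T ∈ s, P T
  · rw [if_pos hE]
    nlinarith [mul_nonneg hμ (sq_nonneg (a - 1))]
  · rw [if_neg hE]
    have ha' : a = 0 := Finset.sum_eq_zero fun T hT => by
      have hP : ¬ P T := fun h => hE ⟨T, hT, h⟩
      simp [hP]
    rw [ha']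
    simp

lemma failPr_union_ge {U : Type*} [Fintype U] [DecidableEq U] {p : ℝ} (h0 : 0 ≤ p) (h1 : p ≤ 1)
    (𝒯 : Finset (Finset U)) :
    (∑ T ∈ 𝒯, p ^ T.card) - ∑ q ∈ 𝒯.offDiag, p ^ (q.1 ∪ q.2).card
      ≤ failPr p (fun W => ∃ T ∈ 𝒯, T ⊆ W) := by
  have step : (∑ T ∈ 𝒯, failPr p (fun W => T ⊆ W))
      - (∑ q ∈ 𝒯.offDiag, failPr p (fun W => q.1 ∪ q.2 ⊆ W))
      ≤ failPr p (fun W => ∃ T ∈ 𝒯, T ⊆ W) := by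
    unfold failPr
    rw [Finset.sum_comm, Finset.sum_comm (s := 𝒯.offDiag), ← Finset.sum_sub_distrib]
    refine Finset.sum_le_sum fun W _ => ?_
    have hμ : 0 ≤ p ^ W.card * (1 - p) ^ (Fintype.card U - W.card) :=
      mul_nonneg (pow_nonneg h0 _) (pow_nonneg (by linarith) _)
    exact indicator_bonferroni 𝒯 (fun T => T ⊆ W)
      (fun q => q.1 ∪ q.2 ⊆ W) (fun q => Finset.union_subset_iff) _ hμ
  refine le_trans (le_of_eq ?_) step
  rw [Finset.sum_congr rfl fun T _ => (failPr_subset p T).symm,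
    Finset.sum_congr rfl fun (q : Finset U × Finset U) _ => (failPr_subset p (q.1 ∪ q.2)).symm]

theorem stmt_18 {U : Type*} [Fintype U] [DecidableEq U] (m1 m2 : ℕ)
    (hm1 : 0 < m1) (hm2 : 0 < m2)
    (S1 : Fin m1 → Finset U) (S2 : Fin m2 → Finset U) (d mbar : ℕ)
    (hmin : ∀ i j, d + 1 ≤ (S1 i ∪ S2 j).card)
    (hattain : ∃ i j, (S1 i ∪ S2 j).card = d + 1)
    (hmbar : mbar = (((Finset.univ : Finset (Fin m1 × Fin m2)).image
        (fun ij => S1 ij.1 ∪ S2 ij.2)).filter (fun T => T.card = d + 1)).card)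
    (hminpairs : ∀ i j i' j', S1 i ∪ S2 j ≠ S1 i' ∪ S2 j' →
      (S1 i ∪ S2 j).card = d + 1 → (S1 i' ∪ S2 j').card = d + 1 →
      d + 2 ≤ ((S1 i ∪ S2 j) ∪ (S1 i' ∪ S2 j')).card)
    (hnonmin : ∀ i j i' j', S1 i ∪ S2 j ≠ S1 i' ∪ S2 j' →
      (d + 2 ≤ (S1 i ∪ S2 j).card ∨ d + 2 ≤ (S1 i' ∪ S2 j').card) →
      d + 3 ≤ ((S1 i ∪ S2 j) ∪ (S1 i' ∪ S2 j')).card)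
    (p ε : ℝ) (hε : ε ∈ Set.Ioo (0:ℝ) 1) (hp0 : 0 < p) (hp : p ≤ ε / (m1 * m2)) :
    (1 - ε) * mbar * p ^ (d + 1) ≤
        failPr p (fun W => ∃ i j, S1 i ∪ S2 j ⊆ W) ∧
      failPr p (fun W => ∃ i j, S1 i ∪ S2 j ⊆ W) ≤ (1 + ε) * mbar * p ^ (d + 1) := by
  obtain ⟨hε0, hε1⟩ := hε
  have hm : (1:ℝ) ≤ (m1 : ℝ) * m2 := by
    have h1 : 1 ≤ m1 * m2 := Nat.mul_pos hm1 hm2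
    exact_mod_cast h1
  have hc : (0:ℝ) < (m1:ℝ) * m2 := by linarith
  have hmp : (m1 : ℝ) * m2 * p ≤ ε := by
    calc (m1:ℝ) * m2 * p ≤ (m1:ℝ) * m2 * (ε / ((m1:ℝ) * m2)) :=
          mul_le_mul_of_nonneg_left hp (le_of_lt hc)
      _ = ε := by field_simp
  have hp1 : p ≤ 1 := by nlinarith
  set 𝒯 := (Finset.univ : Finset (Fin m1 × Fin m2)).image
      (fun ij => S1 ij.1 ∪ S2 ij.2) with h𝒯
  set 𝒯min := 𝒯.filter (fun T => T.card = d + 1) with h𝒯min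
  have hrep : ∀ T ∈ 𝒯, ∃ i j, S1 i ∪ S2 j = T := by
    intro T hT
    rw [h𝒯, Finset.mem_image] at hT
    obtain ⟨ij, _, h⟩ := hT
    exact ⟨ij.1, ij.2, h⟩
  have hTcard : 𝒯.card ≤ m1 * m2 := le_trans Finset.card_image_le (by simp)
  have hmincard : ∀ T ∈ 𝒯, d + 1 ≤ T.card := fun T hT => by
    obtain ⟨i, j, h⟩ := hrep T hT
    rw [← h]; exact hmin i j
  have hEiff : ∀ W : Finset U, (∃ i j, S1 i ∪ S2 j ⊆ W) ↔ (∃ T ∈ 𝒯, T ⊆ W) := by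
    intro W
    constructor
    · rintro ⟨i, j, h⟩
      exact ⟨_, Finset.mem_image_of_mem _ (Finset.mem_univ (i, j)), h⟩
    · rintro ⟨T, hT, hTW⟩
      obtain ⟨i, j, h⟩ := hrep T hT
      exact ⟨i, j, h ▸ hTW⟩
  have hcongr : failPr p (fun W => ∃ i j, S1 i ∪ S2 j ⊆ W)
      = failPr p (fun W => ∃ T ∈ 𝒯, T ⊆ W) := failPr_congr p hEiff
  have hmbar' : mbar = 𝒯min.card := hmbar
  have hmbar1 : 1 ≤ mbar := by
    obtain ⟨i, j, hij⟩ := hattain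
    rw [hmbar']
    exact Finset.card_pos.mpr ⟨S1 i ∪ S2 j, Finset.mem_filter.mpr
      ⟨Finset.mem_image_of_mem _ (Finset.mem_univ (i, j)), hij⟩⟩
  have hmbarle : mbar ≤ m1 * m2 :=
    hmbar' ▸ le_trans (Finset.card_le_card (Finset.filter_subset _ _)) hTcard
  have hppos : (0:ℝ) ≤ p := le_of_lt hp0
  have hpd : (0:ℝ) ≤ p ^ (d + 1) := pow_nonneg hppos _
  have hmbarR : (1:ℝ) ≤ (mbar:ℝ) := by exact_mod_cast hmbar1
  have hmbarleR : (mbar:ℝ) ≤ (m1:ℝ) * m2 := by exact_mod_cast hmbarle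
  have hsum1 : ∑ T ∈ 𝒯min, p ^ T.card = (mbar:ℝ) * p ^ (d + 1) := by
    rw [Finset.sum_congr rfl (fun T hT => by
      rw [(Finset.mem_filter.mp hT).2]), Finset.sum_const, hmbar', nsmul_eq_mul]
  have hkey : (mbar:ℝ) * ((m1:ℝ) * m2) * p ^ (d + 2) ≤ ε * (mbar:ℝ) * p ^ (d + 1) := by
    have hps : p ^ (d + 2) = p ^ (d + 1) * p := pow_succ p (d + 1)
    calc (mbar:ℝ) * ((m1:ℝ) * m2) * p ^ (d + 2)
        = ((mbar:ℝ) * p ^ (d + 1)) * ((m1:ℝ) * m2 * p) := by rw [hps]; ring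
      _ ≤ ((mbar:ℝ) * p ^ (d + 1)) * ε :=
          mul_le_mul_of_nonneg_left hmp (mul_nonneg (Nat.cast_nonneg mbar) hpd)
      _ = ε * (mbar:ℝ) * p ^ (d + 1) := by ring
  constructor
  · -- lower bound
    rw [hcongr]
    have hmono : failPr p (fun W => ∃ T ∈ 𝒯min, T ⊆ W)
        ≤ failPr p (fun W => ∃ T ∈ 𝒯, T ⊆ W) :=
      failPr_mono hppos hp1 (fun W ⟨T, hT, h⟩ => ⟨T, Finset.filter_subset _ _ hT, h⟩)
    refine le_trans ?_ (le_trans (failPr_union_ge hppos hp1 𝒯min) hmono)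
    have hsum2 : ∑ q ∈ 𝒯min.offDiag, p ^ (q.1 ∪ q.2).card
        ≤ ((mbar * (m1 * m2) : ℕ) : ℝ) * p ^ (d + 2) := by
      refine le_trans (Finset.sum_le_sum (g := fun _ => p ^ (d + 2)) (fun q hq => ?_)) ?_
      · rw [Finset.mem_offDiag] at hq
        obtain ⟨hq1, hq2, hqne⟩ := hq
        obtain ⟨i, j, hij⟩ := hrep q.1 (Finset.filter_subset _ _ hq1)
        obtain ⟨i', j', hij'⟩ := hrep q.2 (Finset.filter_subset _ _ hq2)
        have hcard1 : q.1.card = d + 1 := (Finset.mem_filter.mp hq1).2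
        have hcard2 : q.2.card = d + 1 := (Finset.mem_filter.mp hq2).2
        have hle : d + 2 ≤ (q.1 ∪ q.2).card := by
          rw [← hij, ← hij']
          exact hminpairs i j i' j' (by rw [hij, hij']; exact hqne)
            (by rw [hij]; exact hcard1) (by rw [hij']; exact hcard2)
        exact pow_le_pow_of_le_one hppos hp1 hle
      · rw [Finset.sum_const, nsmul_eq_mul]
        have hcnt : 𝒯min.offDiag.card ≤ mbar * (m1 * m2) := by
          rw [Finset.offDiag_card, ← hmbar']
          calc mbar * mbar - mbar ≤ mbar * mbar := Nat.sub_le _ _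
            _ ≤ mbar * (m1 * m2) := Nat.mul_le_mul_left mbar hmbarle
        have := pow_nonneg hppos (d + 2)
        exact mul_le_mul_of_nonneg_right (by exact_mod_cast hcnt) this
    rw [hsum1]
    push_cast at hsum2
    nlinarith [hkey, hsum2]
  · -- upper bound
    rw [hcongr]
    refine le_trans (failPr_union_le hppos hp1 𝒯) ?_
    rw [← Finset.sum_filter_add_sum_filter_not 𝒯 (fun T => T.card = d + 1)
      (fun T => p ^ T.card)]
    have hsum3 : ∑ T ∈ 𝒯.filter (fun T => ¬ T.card = d + 1), p ^ T.card
        ≤ ((m1 * m2 : ℕ) : ℝ) * p ^ (d + 2) := by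
      refine le_trans (Finset.sum_le_sum (g := fun _ => p ^ (d + 2)) (fun T hT => ?_)) ?_
      · rw [Finset.mem_filter] at hT
        have h1 := hmincard T hT.1
        have h2 : d + 2 ≤ T.card := by omega
        exact pow_le_pow_of_le_one hppos hp1 h2
      · rw [Finset.sum_const, nsmul_eq_mul]
        have hcnt : (𝒯.filter (fun T => ¬ T.card = d + 1)).card ≤ m1 * m2 :=
          le_trans (Finset.card_le_card (Finset.filter_subset _ _)) hTcard
        exact mul_le_mul_of_nonneg_right (by exact_mod_cast hcnt) (pow_nonneg hppos _)
    have hsum1' : ∑ T ∈ 𝒯.filter (fun T => T.card = d + 1), p ^ T.card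
        = (mbar:ℝ) * p ^ (d + 1) := hsum1
    rw [hsum1']
    push_cast at hsum3
    have hkey2 : ((m1:ℝ) * m2) * p ^ (d + 2) ≤ ε * (mbar:ℝ) * p ^ (d + 1) := by
      have hps : p ^ (d + 2) = p ^ (d + 1) * p := pow_succ p (d + 1)
      have h1 : ((m1:ℝ) * m2) * p ^ (d + 2) ≤ ε * p ^ (d + 1) := by
        rw [hps]
        calc (m1:ℝ) * m2 * (p ^ (d + 1) * p) = p ^ (d + 1) * ((m1:ℝ) * m2 * p) := by ring
          _ ≤ p ^ (d + 1) * ε := mul_le_mul_of_nonneg_left hmp hpd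
          _ = ε * p ^ (d + 1) := by ring
      have h2 : ε * p ^ (d + 1) ≤ ε * (mbar:ℝ) * p ^ (d + 1) := by
        nlinarith [mul_nonneg (le_of_lt hε0) hpd]
      linarith
    linarith
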